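/- Let X be a metric space, n ≥ 1, and let B_1, …, B_n be pairwise disjoint open subsets of X; set R = X ∖ (B_1 ∪ … ∪ B_n). Let δ > 0 and let x, y ∈ R. Assume: (a) there exists a continuous path γ : [0,1] → X with γ(0) = x, γ(1) = y whose length is at most d(x,y) + δ; and (b) for each i, any two points of the frontier ∂B_i can be joined by a continuous path taking values in R of length at most δ. Then x and y can be joined by a continuous path taking values in R of length at most d(x,y) + (n+1)δ. -/

import Mathlib

/-- The length of a (continuous) path `γ : ℝ → X` parametrized on `[0,1]`,
defined as its total variation on `[0,1]`. -/
noncomputable def pathLength {X : Type*} [PseudoMetricSpace X] (γ : ℝ → X) : ENNReal :=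
  eVariationOn γ (Set.Icc 0 1)

open Set

/-- Continuity on a union of two closed sets. -/
lemma continuousOn_union_of_isClosed {α β : Type*} [TopologicalSpace α] [TopologicalSpace β]
    {f : α → β} {s t : Set α} (hs : IsClosed s) (ht : IsClosed t)
    (hfs : ContinuousOn f s) (hft : ContinuousOn f t) : ContinuousOn f (s ∪ t) := by
  intro z hz
  apply ContinuousWithinAt.union
  · by_cases h : z ∈ s
    · exact hfs z h
    · exact continuousWithinAt_of_notMem_closure (by rwa [hs.closure_eq])
  · by_cases h : z ∈ t
    · exact hft z h
    · exact continuousWithinAt_of_notMem_closure (by rwa [ht.closure_eq])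

lemma split_var {X : Type*} [PseudoMetricSpace X] (f : ℝ → X) {a b : ℝ}
    (h0a : (0:ℝ) ≤ a) (hab : a ≤ b) (hb1 : b ≤ 1) :
    eVariationOn f (Icc 0 a) + eVariationOn f (Icc a b) + eVariationOn f (Icc b 1)
      = eVariationOn f (Icc 0 1) := by
  have h1 := eVariationOn.Icc_add_Icc f (s := univ) hab hb1 (mem_univ b)
  have h2 := eVariationOn.Icc_add_Icc f (s := univ) h0a (hab.trans hb1) (mem_univ a)
  simp only [univ_inter] at h1 h2
  rw [add_assoc, h1, h2]

lemma reroute_aux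
    {X : Type*} [MetricSpace X]
    (n : ℕ)
    (B : Fin n → Set X) (hBopen : ∀ i, IsOpen (B i))
    (hBdisj : Pairwise fun i j => Disjoint (B i) (B j))
    (R : Set X) (hR : R = (⋃ i, B i)ᶜ)
    (δ : ℝ) (hδ : 0 < δ)
    (x y : X) (hx : x ∈ R) (hy : y ∈ R)
    (hb : ∀ i, ∀ p ∈ frontier (B i), ∀ q ∈ frontier (B i),
      ∃ γ : ℝ → X, ContinuousOn γ (Set.Icc 0 1) ∧ γ 0 = p ∧ γ 1 = q ∧
        (∀ t ∈ Set.Icc (0 : ℝ) 1, γ t ∈ R) ∧ pathLength γ ≤ ENNReal.ofReal δ) :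
    ∀ (k : ℕ) (S : Finset (Fin n)), S.card ≤ k →
      ∀ γ : ℝ → X, ContinuousOn γ (Set.Icc 0 1) → γ 0 = x → γ 1 = y →
        (∀ i, i ∉ S → ∀ t ∈ Set.Icc (0:ℝ) 1, γ t ∉ B i) →
      ∃ γ' : ℝ → X, ContinuousOn γ' (Set.Icc 0 1) ∧ γ' 0 = x ∧ γ' 1 = y ∧
        (∀ t ∈ Set.Icc (0 : ℝ) 1, γ' t ∈ R) ∧
        pathLength γ' ≤ pathLength γ + S.card * ENNReal.ofReal δ := by
  have hRB : ∀ z, z ∈ R → ∀ i, z ∉ B i := by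
    intro z hz i hzi
    rw [hR, mem_compl_iff, mem_iUnion, not_exists] at hz
    exact hz i hzi
  have hmemR : ∀ z : X, (∀ i, z ∉ B i) → z ∈ R := by
    intro z hz
    rw [hR, mem_compl_iff, mem_iUnion, not_exists]
    exact hz
  intro k
  induction k with
  | zero =>
    intro S hS γ hc h0 h1 havoid
    rw [Nat.le_zero, Finset.card_eq_zero] at hS
    subst hS
    exact ⟨γ, hc, h0, h1, fun t ht => hmemR _ fun i =>
      havoid i (Finset.notMem_empty i) t ht, le_self_add⟩
  | succ k IH =>
    intro S hS γ hc h0 h1 havoid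
    by_cases hmeet : ∃ i ∈ S, ∃ t ∈ Set.Icc (0:ℝ) 1, γ t ∈ B i
    · obtain ⟨i, hiS, hti⟩ := hmeet
      -- the set of times where γ is inside B i
      set A : Set ℝ := {t | t ∈ Set.Icc (0:ℝ) 1 ∧ γ t ∈ B i} with hA
      have hA_ne : A.Nonempty := by obtain ⟨t, ht, htB⟩ := hti; exact ⟨t, ht, htB⟩
      have hA_sub : A ⊆ Set.Icc 0 1 := fun t ht => ht.1
      have hbddA : BddBelow A := ⟨0, fun t ht => ht.1.1⟩
      have hbddA' : BddAbove A := ⟨1, fun t ht => ht.1.2⟩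
      set a := sInf A with hadef
      set b := sSup A with hbdef
      have hle : ∀ t ∈ A, a ≤ t ∧ t ≤ b := fun t ht => ⟨csInf_le hbddA ht, le_csSup hbddA' ht⟩
      have h0a : 0 ≤ a := le_csInf hA_ne fun t ht => ht.1.1
      have hb1 : b ≤ 1 := csSup_le hA_ne fun t ht => ht.1.2
      have habw : a ≤ b := csInf_le_csSup hA_ne hbddA hbddA'
      have haI : a ∈ Set.Icc (0:ℝ) 1 := ⟨h0a, habw.trans hb1⟩
      have hbI : b ∈ Set.Icc (0:ℝ) 1 := ⟨h0a.trans habw, hb1⟩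
      have hx0 : γ 0 ∉ B i := h0 ▸ hRB x hx i
      have hy1 : γ 1 ∉ B i := h1 ▸ hRB y hy i
      -- γ a, γ b lie in the closure of B i
      have hclA : closure A ⊆ Set.Icc (0:ℝ) 1 := closure_minimal hA_sub isClosed_Icc
      have hcl : ∀ c : ℝ, c ∈ closure A → γ c ∈ closure (B i) := by
        intro c hcmem
        have h1' : γ c ∈ γ '' closure A := ⟨c, hcmem, rfl⟩
        have h2' := (hc.mono hclA).image_closure h1'
        refine closure_mono ?_ h2'
        rintro z ⟨t, ht, rfl⟩
        exact ht.2
      have hγa_cl : γ a ∈ closure (B i) := hcl a (csInf_mem_closure hA_ne hbddA)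
      have hγb_cl : γ b ∈ closure (B i) := hcl b (csSup_mem_closure hA_ne hbddA')
      -- γ a ∉ B i
      have hγa_not : γ a ∉ B i := by
        intro hmem
        have ha0 : a ≠ 0 := fun h => hx0 (h ▸ hmem)
        have ha0' : 0 < a := lt_of_le_of_ne h0a (Ne.symm ha0)
        have hnhd : γ ⁻¹' (B i) ∈ nhdsWithin a (Set.Icc 0 1) :=
          (hc a haI) ((hBopen i).mem_nhds hmem)
        have hsub : Set.Ico 0 a ⊆ Set.Icc (0:ℝ) 1 :=
          fun t ht => ⟨ht.1, ht.2.le.trans haI.2⟩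
        have hmem2 : γ ⁻¹' (B i) ∈ nhdsWithin a (Set.Ico 0 a) :=
          nhdsWithin_mono a hsub hnhd
        have hne : (nhdsWithin a (Set.Ico 0 a)).NeBot := by
          rw [← mem_closure_iff_nhdsWithin_neBot, closure_Ico (ne_of_lt ha0')]
          exact ⟨h0a, le_rfl⟩
        haveI := hne
        obtain ⟨t, htB, htI⟩ := Filter.nonempty_of_mem (Filter.inter_mem hmem2 self_mem_nhdsWithin)
        exact absurd ((hle t ⟨hsub htI, htB⟩).1) (not_le.mpr htI.2)
      have hγb_not : γ b ∉ B i := by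
        intro hmem
        have hb1' : b ≠ 1 := fun h => hy1 (h ▸ hmem)
        have hb1'' : b < 1 := lt_of_le_of_ne hb1 hb1'
        have hnhd : γ ⁻¹' (B i) ∈ nhdsWithin b (Set.Icc 0 1) :=
          (hc b hbI) ((hBopen i).mem_nhds hmem)
        have hsub : Set.Ioc b 1 ⊆ Set.Icc (0:ℝ) 1 :=
          fun t ht => ⟨hbI.1.trans ht.1.le, ht.2⟩
        have hmem2 : γ ⁻¹' (B i) ∈ nhdsWithin b (Set.Ioc b 1) :=
          nhdsWithin_mono b hsub hnhd
        have hne : (nhdsWithin b (Set.Ioc b 1)).NeBot := by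
          rw [← mem_closure_iff_nhdsWithin_neBot, closure_Ioc (ne_of_lt hb1'')]
          exact ⟨le_rfl, hb1⟩
        haveI := hne
        obtain ⟨t, htB, htI⟩ := Filter.nonempty_of_mem (Filter.inter_mem hmem2 self_mem_nhdsWithin)
        exact absurd ((hle t ⟨hsub htI, htB⟩).2) (not_le.mpr htI.1)
      have hfront : frontier (B i) = closure (B i) \ (B i) := (hBopen i).frontier_eq
      have hγa_fr : γ a ∈ frontier (B i) := by rw [hfront]; exact ⟨hγa_cl, hγa_not⟩
      have hγb_fr : γ b ∈ frontier (B i) := by rw [hfront]; exact ⟨hγb_cl, hγb_not⟩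
      have hab : a < b := by
        obtain ⟨t, ht⟩ := hA_ne
        have h1' := hle t ht
        have : a ≠ t := fun h => hγa_not (by rw [h]; exact ht.2)
        exact lt_of_lt_of_le (lt_of_le_of_ne h1'.1 this) h1'.2
      -- boundary path
      obtain ⟨η, hηc, hη0, hη1, hηR, hηlen⟩ := hb i (γ a) hγa_fr (γ b) hγb_fr
      set φ : ℝ → ℝ := fun t => (t - a) / (b - a) with hφdef
      have hba : 0 < b - a := sub_pos.mpr hab
      have hφa : φ a = 0 := by simp [hφdef]
      have hφb : φ b = 1 := by rw [hφdef]; exact div_self hba.ne'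
      have hφmono : MonotoneOn φ (Set.Icc a b) := by
        intro s hs t ht hst
        simp only [hφdef]
        gcongr <;> linarith
      have hφmaps : Set.MapsTo φ (Set.Icc a b) (Set.Icc 0 1) := by
        intro t ht
        constructor
        · exact div_nonneg (by linarith [ht.1]) hba.le
        · rw [div_le_one hba]; linarith [ht.2]
      have hφcont : Continuous φ := by
        apply Continuous.div_const
        exact continuous_id.sub continuous_const
      set γ₂ : ℝ → X := fun t => if t < a then γ t else if t ≤ b then η (φ t) else γ t
        with hγ₂def
      have E1 : Set.EqOn γ₂ γ (Set.Icc 0 a) := by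
        intro t ht
        rcases lt_or_eq_of_le ht.2 with h | h
        · simp [hγ₂def, h]
        · subst h
          simp [hγ₂def, lt_irrefl, habw, hφa, hη0]
      have E2 : Set.EqOn γ₂ (η ∘ φ) (Set.Icc a b) := by
        intro t ht
        simp [hγ₂def, not_lt.mpr ht.1, ht.2]
      have E3 : Set.EqOn γ₂ γ (Set.Icc b 1) := by
        intro t ht
        have h1' : ¬ t < a := not_lt.mpr (habw.trans ht.1)
        rcases lt_or_eq_of_le ht.1 with h | h
        · simp [hγ₂def, h1', not_le.mpr h]
        · subst h
          simp [hγ₂def, h1', hφb, hη1]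
      have hcomp : ContinuousOn (η ∘ φ) (Set.Icc a b) :=
        hηc.comp hφcont.continuousOn hφmaps
      have hc₂ : ContinuousOn γ₂ (Set.Icc 0 1) := by
        have hsplit : Set.Icc (0:ℝ) 1 = (Set.Icc 0 a ∪ Set.Icc a b) ∪ Set.Icc b 1 := by
          rw [Set.Icc_union_Icc_eq_Icc h0a habw, Set.Icc_union_Icc_eq_Icc (h0a.trans habw) hb1]
        rw [hsplit]
        apply continuousOn_union_of_isClosed (IsClosed.union isClosed_Icc isClosed_Icc)
          isClosed_Icc
        · apply continuousOn_union_of_isClosed isClosed_Icc isClosed_Icc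
          · exact (hc.mono (Set.Icc_subset_Icc le_rfl haI.2)).congr E1
          · exact hcomp.congr E2
        · exact (hc.mono (Set.Icc_subset_Icc hbI.1 le_rfl)).congr E3
      -- endpoints
      have h0₂ : γ₂ 0 = x := by rw [E1 ⟨le_rfl, h0a⟩, h0]
      have h1₂ : γ₂ 1 = y := by rw [E3 ⟨hb1, le_rfl⟩, h1]
      -- avoidance
      have havoid₂ : ∀ j, j ∉ S.erase i → ∀ t ∈ Set.Icc (0:ℝ) 1, γ₂ t ∉ B j := by
        intro j hj t ht htB
        rcases lt_or_ge t a with h | h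
        · have : γ₂ t = γ t := by simp [hγ₂def, h]
          rw [this] at htB
          have htA : t ∉ A := fun hA' => absurd (hle t hA').1 (not_le.mpr h)
          rcases eq_or_ne j i with rfl | hji
          · exact htA ⟨ht, htB⟩
          · exact havoid j (fun hjS => hj (Finset.mem_erase.mpr ⟨hji, hjS⟩)) t ht htB
        · rcases le_or_gt t b with h' | h'
          · have : γ₂ t = η (φ t) := E2 ⟨h, h'⟩
            rw [this] at htB
            exact hRB _ (hηR (φ t) (hφmaps ⟨h, h'⟩)) j htB
          · have : γ₂ t = γ t := by
              simp [hγ₂def, not_lt.mpr (habw.trans h'.le), not_le.mpr h']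
            rw [this] at htB
            have htA : t ∉ A := fun hA' => absurd (hle t hA').2 (not_le.mpr h')
            rcases eq_or_ne j i with rfl | hji
            · exact htA ⟨ht, htB⟩
            · exact havoid j (fun hjS => hj (Finset.mem_erase.mpr ⟨hji, hjS⟩)) t ht htB
      -- length bound for γ₂
      have hlen₂ : pathLength γ₂ ≤ pathLength γ + ENNReal.ofReal δ := by
        have hs2 := split_var γ₂ h0a habw hb1
        have hs1 := split_var γ h0a habw hb1
        have e1 : eVariationOn γ₂ (Set.Icc 0 a) = eVariationOn γ (Set.Icc 0 a) :=
          eVariationOn.eq_of_eqOn E1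
        have e3 : eVariationOn γ₂ (Set.Icc b 1) = eVariationOn γ (Set.Icc b 1) :=
          eVariationOn.eq_of_eqOn E3
        have e2 : eVariationOn γ₂ (Set.Icc a b) ≤ ENNReal.ofReal δ := by
          rw [eVariationOn.eq_of_eqOn E2]
          exact (eVariationOn.comp_le_of_monotoneOn η φ hφmono hφmaps).trans hηlen
        calc pathLength γ₂
            = eVariationOn γ₂ (Set.Icc 0 a) + eVariationOn γ₂ (Set.Icc a b)
              + eVariationOn γ₂ (Set.Icc b 1) := (hs2).symm
          _ ≤ eVariationOn γ (Set.Icc 0 a) + ENNReal.ofReal δ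
              + eVariationOn γ (Set.Icc b 1) := by
              rw [e1, e3]; exact add_le_add (add_le_add le_rfl e2) le_rfl
          _ = (eVariationOn γ (Set.Icc 0 a) + eVariationOn γ (Set.Icc b 1))
              + ENNReal.ofReal δ := by ring
          _ ≤ pathLength γ + ENNReal.ofReal δ := by
              apply add_le_add _ le_rfl
              calc eVariationOn γ (Set.Icc 0 a) + eVariationOn γ (Set.Icc b 1)
                  ≤ eVariationOn γ (Set.Icc 0 a) + eVariationOn γ (Set.Icc a b)
                    + eVariationOn γ (Set.Icc b 1) := by
                    rw [add_right_comm]; exact le_add_right le_rfl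
                _ = pathLength γ := hs1
      -- apply IH
      have hScard : (S.erase i).card ≤ k := by
        have := Finset.card_erase_of_mem hiS
        omega
      obtain ⟨γ', hc', h0', h1', hR', hlen'⟩ :=
        IH (S.erase i) hScard γ₂ hc₂ h0₂ h1₂ havoid₂
      refine ⟨γ', hc', h0', h1', hR', ?_⟩
      calc pathLength γ'
          ≤ pathLength γ₂ + (S.erase i).card * ENNReal.ofReal δ := hlen'
        _ ≤ (pathLength γ + ENNReal.ofReal δ) + (S.erase i).card * ENNReal.ofReal δ :=
            add_le_add hlen₂ le_rfl
        _ = pathLength γ + ((S.erase i).card + 1) * ENNReal.ofReal δ := by ring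
        _ = pathLength γ + S.card * ENNReal.ofReal δ := by
            congr 2
            have := Finset.card_erase_add_one hiS
            rw [← this]
            push_cast
            ring
    · push_neg at hmeet
      refine ⟨γ, hc, h0, h1, fun t ht => hmemR _ fun j => ?_, le_self_add⟩
      by_cases hjS : j ∈ S
      · exact hmeet j hjS t ht
      · exact havoid j hjS t ht

/-- **Rerouting paths around small disks.** Let `X` be a metric space, `B_1, …, B_n`
pairwise disjoint open subsets, `R = X ∖ (B_1 ∪ … ∪ B_n)`, `δ > 0`, and `x, y ∈ R`.
If (a) `x` and `y` are joined in `X` by a continuous path of length at most `d(x,y) + δ`,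
and (b) any two points of each frontier `∂B_i` are joined by a continuous path in `R`
of length at most `δ`, then `x` and `y` are joined by a continuous path in `R` of
length at most `d(x,y) + (n+1)δ`. -/
theorem reroute_path_around_disks
    {X : Type*} [MetricSpace X]
    (n : ℕ) (hn : 1 ≤ n)
    (B : Fin n → Set X) (hBopen : ∀ i, IsOpen (B i))
    (hBdisj : Pairwise fun i j => Disjoint (B i) (B j))
    (R : Set X) (hR : R = (⋃ i, B i)ᶜ)
    (δ : ℝ) (hδ : 0 < δ)
    (x y : X) (hx : x ∈ R) (hy : y ∈ R)
    (ha : ∃ γ : ℝ → X, ContinuousOn γ (Set.Icc 0 1) ∧ γ 0 = x ∧ γ 1 = y ∧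
      pathLength γ ≤ ENNReal.ofReal (dist x y + δ))
    (hb : ∀ i, ∀ p ∈ frontier (B i), ∀ q ∈ frontier (B i),
      ∃ γ : ℝ → X, ContinuousOn γ (Set.Icc 0 1) ∧ γ 0 = p ∧ γ 1 = q ∧
        (∀ t ∈ Set.Icc (0 : ℝ) 1, γ t ∈ R) ∧ pathLength γ ≤ ENNReal.ofReal δ) :
    ∃ γ : ℝ → X, ContinuousOn γ (Set.Icc 0 1) ∧ γ 0 = x ∧ γ 1 = y ∧
      (∀ t ∈ Set.Icc (0 : ℝ) 1, γ t ∈ R) ∧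
      pathLength γ ≤ ENNReal.ofReal (dist x y + (n + 1) * δ) := by
  obtain ⟨γ, hc, h0, h1, hlen⟩ := ha
  obtain ⟨γ', hc', h0', h1', hR', hlen'⟩ :=
    reroute_aux n B hBopen hBdisj R hR δ hδ x y hx hy hb n Finset.univ
      (by simp) γ hc h0 h1 (fun i hi => absurd (Finset.mem_univ i) hi)
  refine ⟨γ', hc', h0', h1', hR', ?_⟩
  calc pathLength γ'
      ≤ pathLength γ + (Finset.univ : Finset (Fin n)).card * ENNReal.ofReal δ := hlen'
    _ ≤ ENNReal.ofReal (dist x y + δ) + n * ENNReal.ofReal δ := by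
        rw [Finset.card_univ, Fintype.card_fin]
        exact add_le_add hlen le_rfl
    _ = ENNReal.ofReal (dist x y + (n + 1) * δ) := by
        rw [← ENNReal.ofReal_natCast n, ← ENNReal.ofReal_mul (Nat.cast_nonneg n),
          ← ENNReal.ofReal_add (by positivity) (by positivity)]
        congr 1
        ring
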